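/- Let {E_1, …, E_m} be a unitary error set on ℂ^N and let K ≤ N be a positive integer. For a ∈ [N] and b ∈ [K], define the N×(Km) matrix B_{ab} = (1/√N)·Σ_{i=1}^m E_i |a⟩⟨b| ⊗ ⟨i|. Then Σ_{a=1}^N Σ_{b=1}^K B_{ab}† B_{ab} = I_{Km} and Σ_{a=1}^N Σ_{b=1}^K B_{ab} B_{ab}† = (Km/N)·I_N. -/

import Mathlib

open scoped Kronecker ComplexOrder
open Matrix MeasureTheory ProbabilityTheory

noncomputable section

/-- The positive semidefinite square root of a positive semidefinite matrix
(the definition removed from Mathlib, restored with its old meaning). -/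
def Matrix.PosSemidef.sqrt {n : Type*} [Fintype n] [DecidableEq n] {𝕜 : Type*} [RCLike 𝕜]
    {A : Matrix n n 𝕜} (hA : A.PosSemidef) : Matrix n n 𝕜 :=
  hA.1.eigenvectorUnitary.1 * diagonal ((↑) ∘ (√·) ∘ hA.1.eigenvalues) *
  (star hA.1.eigenvectorUnitary : Matrix n n 𝕜)

/-- The Euclidean (ℓ²) norm of a finitely indexed complex vector. -/
def enorm2 {ι : Type*} [Fintype ι] (x : ι → ℂ) : ℝ :=
  Real.sqrt (∑ i, ‖x i‖ ^ 2)

/-- `T` is a `δ`-approximate isometry: every singular value lies in `[1-δ, 1+δ]`,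
equivalently `(1-δ)‖c‖ ≤ ‖Tc‖ ≤ (1+δ)‖c‖` for every vector `c`. -/
def IsApproxIsometry {ι κ : Type*} [Fintype ι] [Fintype κ] (δ : ℝ) (T : Matrix ι κ ℂ) : Prop :=
  ∀ c : κ → ℂ,
    (1 - δ) * enorm2 c ≤ enorm2 (T.mulVec c) ∧ enorm2 (T.mulVec c) ≤ (1 + δ) * enorm2 c

/-- A unitary error set: each `E i` is unitary and `tr((E i)ᴴ E j) = 0` for `i ≠ j`. -/
def IsUnitaryErrorSet {ι : Type*} {N : ℕ} (E : ι → Matrix (Fin N) (Fin N) ℂ) : Prop :=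
  (∀ i, (E i)ᴴ * E i = 1 ∧ E i * (E i)ᴴ = 1) ∧
    ∀ i j : ι, i ≠ j → ((E i)ᴴ * E j).trace = 0

/-- The `N × (Km)` matrix `Y = Σ_i E_i V ⊗ ⟨i|`, whose column indexed by `(j, i)`
is the vector `E_i · V · e_j`. -/
def shiftMat {N K m : ℕ} (E : Fin m → Matrix (Fin N) (Fin N) ℂ) (V : Matrix (Fin N) (Fin K) ℂ) :
    Matrix (Fin N) (Fin K × Fin m) ℂ :=
  Matrix.of fun a ji => (E ji.2 * V) a ji.1

/-- The operator norm (largest singular value) of a complex matrix. -/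
def opNorm {ι κ : Type*} [Fintype ι] [Fintype κ] (A : Matrix ι κ ℂ) : ℝ :=
  sSup {r | ∃ c : κ → ℂ, enorm2 c = 1 ∧ r = enorm2 (A.mulVec c)}

/-- The smallest singular value of a (tall) complex matrix. -/
def sMin {ι κ : Type*} [Fintype ι] [Fintype κ] (A : Matrix ι κ ℂ) : ℝ :=
  sInf {r | ∃ c : κ → ℂ, enorm2 c = 1 ∧ r = enorm2 (A.mulVec c)}

/-- `isometrize G = G (GᴴG)^{-1/2}`: round all singular values of `G` to `1`. -/
def isometrize {N K : ℕ} (G : Matrix (Fin N) (Fin K) ℂ) : Matrix (Fin N) (Fin K) ℂ :=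
  G * ((Matrix.posSemidef_conjTranspose_mul_self G).sqrt)⁻¹

/-- Round the singular values of a wide matrix `D̂` to one: `(D̂ D̂ᴴ)^{-1/2} D̂`. -/
def coisometrize {ι : Type*} [Fintype ι] [DecidableEq ι] {N : ℕ}
    (Dhat : Matrix ι (Fin N) ℂ) : Matrix ι (Fin N) ℂ :=
  ((Matrix.posSemidef_self_mul_conjTranspose Dhat).sqrt)⁻¹ * Dhat

end

/-- for the matrices `B_{ab} = (1/√N)·Σ_i E_i |a⟩⟨b| ⊗ ⟨i|` built from a unitary
error set, `Σ_{a,b} B_{ab}ᴴ B_{ab} = I_{Km}` and `Σ_{a,b} B_{ab} B_{ab}ᴴ = (Km/N)·I_N`. -/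
theorem stmt_9 {N K m : ℕ} (hN : 0 < N) (hK : 0 < K) (hm : 0 < m) (hKN : K ≤ N)
    (E : Fin m → Matrix (Fin N) (Fin N) ℂ) (hE : IsUnitaryErrorSet E)
    (B : Fin N → Fin K → Matrix (Fin N) (Fin K × Fin m) ℂ)
    (hB : ∀ a b, B a b = Matrix.of fun (x : Fin N) (ji : Fin K × Fin m) =>
      (1 / ((Real.sqrt N : ℝ) : ℂ)) * (if ji.1 = b then E ji.2 x a else 0)) :
    (∑ a : Fin N, ∑ b : Fin K, (B a b)ᴴ * B a b) = 1 ∧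
    (∑ a : Fin N, ∑ b : Fin K, B a b * (B a b)ᴴ) = (((K * m : ℕ) : ℂ) / (N : ℂ)) • 1 := by
  obtain ⟨hu, ho⟩ := hE
  have hNne : (N : ℂ) ≠ 0 := Nat.cast_ne_zero.mpr hN.ne'
  set c : ℂ := 1 / ((Real.sqrt N : ℝ) : ℂ) with hc
  have hcc : star c * c = 1 / (N : ℂ) := by
    simp only [hc, star_div₀, star_one, Complex.star_def, Complex.conj_ofReal]
    rw [div_mul_div_comm, one_mul, ← Complex.ofReal_mul,
      Real.mul_self_sqrt (Nat.cast_nonneg N)]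
    rw [Complex.ofReal_natCast]
  have hccc : c * star c = 1 / (N : ℂ) := by rw [mul_comm]; exact hcc
  constructor
  · ext ⟨j, i⟩ ⟨j', i'⟩
    simp only [Matrix.sum_apply, Matrix.mul_apply, hB, Matrix.conjTranspose_apply,
      Matrix.of_apply, Matrix.one_apply]
    simp only [star_mul', apply_ite (star : ℂ → ℂ), star_zero, ite_mul, mul_ite, zero_mul,
      mul_zero, Finset.sum_ite_irrel, Finset.sum_const_zero, Finset.sum_ite_eq,
      Finset.mem_univ, if_true]
    have key : ∀ i i' : Fin m, (∑ x : Fin N, ∑ x1 : Fin N,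
        star c * star (E i x1 x) * (c * E i' x1 x)) = (1/(N:ℂ)) * ((E i)ᴴ * E i').trace := by
      intro i i'
      have ht : ((E i)ᴴ * E i').trace = ∑ x : Fin N, ∑ x1 : Fin N,
          star (E i x1 x) * E i' x1 x := by
        simp [Matrix.trace, Matrix.mul_apply, Matrix.conjTranspose_apply, Matrix.diag]
      rw [ht, Finset.mul_sum]
      refine Finset.sum_congr rfl fun x _ => ?_
      rw [Finset.mul_sum]
      refine Finset.sum_congr rfl fun x1 _ => ?_
      rw [← hcc]; ring
    rcases eq_or_ne j j' with rfl | hj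
    · rw [if_pos rfl, key]
      rcases eq_or_ne i i' with rfl | hi
      · rw [(hu i).1, Matrix.trace_one]
        simp only [Fintype.card_fin, Prod.mk.injEq, and_true, if_pos rfl, if_true]
        field_simp
      · rw [ho i i' hi, mul_zero]
        simp [Prod.mk.injEq, hi]
    · simp [hj, Prod.mk.injEq]
  · ext x y
    simp only [Matrix.sum_apply, Matrix.mul_apply, hB, Matrix.conjTranspose_apply,
      Matrix.of_apply, Matrix.smul_apply, Matrix.one_apply]
    simp only [star_mul', apply_ite (star : ℂ → ℂ), star_zero, ite_mul, mul_ite, zero_mul,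
      mul_zero, Fintype.sum_prod_type, Finset.sum_ite_irrel, Finset.sum_const_zero,
      Finset.sum_ite_eq, Finset.mem_univ, if_true]
    simp only [Finset.sum_ite_eq', Finset.mem_univ, if_true, if_pos rfl,
      Finset.sum_const, Finset.card_univ, Fintype.card_fin]
    rw [← Finset.smul_sum]
    have hswap : ∑ x1 : Fin N, ∑ i : Fin m, c * E i x x1 * (star c * star (E i y x1))
        = (1/(N:ℂ)) * ∑ i : Fin m, (E i * (E i)ᴴ) x y := by
      rw [Finset.sum_comm, Finset.mul_sum]
      refine Finset.sum_congr rfl fun i _ => ?_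
      rw [Matrix.mul_apply, Finset.mul_sum]
      refine Finset.sum_congr rfl fun a _ => ?_
      rw [Matrix.conjTranspose_apply, ← hccc]; ring
    rw [hswap]
    have hsum : ∑ i : Fin m, (E i * (E i)ᴴ) x y = (m : ℂ) * (if x = y then 1 else 0) := by
      rw [Finset.sum_congr rfl fun i _ => by rw [(hu i).2]]
      simp [Matrix.one_apply, Finset.sum_const, Finset.card_univ, mul_comm]
    rw [hsum, nsmul_eq_mul, smul_eq_mul]
    push_cast
    ring
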